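/- Let A be a unital C*-algebra, let ε : A → ℂ be a character, and let e ∈ A be a nonzero central projection (e = e* = e², and ex = xe for all x ∈ A) such that e·x·e = ε(x)·e for all x ∈ A. Then for every state u on A, u(e) is a real number in [0, 1] and ‖u − ε‖ = 2(1 − u(e)), where the norm is the norm of bounded linear functionals on A. -/

import Mathlib

open scoped ComplexOrder

open Complex

set_option linter.unusedSectionVars false

section aux
variable {A : Type*} [NormedRing A] [StarRing A] [CStarRing A] [NormedAlgebra ℂ A]
    [CompleteSpace A] [StarModule ℂ A]

lemma aux_expand (a b : A) (c : ℂ) : star (b + c • a) * (b + c • a)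
    = star b * b + c • (star b * a) + (starRingEnd ℂ c) • (star a * b)
      + ((c * starRingEnd ℂ c)) • (star a * a) := by
  simp only [star_add, star_smul, add_mul, mul_add, smul_add, smul_mul_assoc, mul_smul_comm,
    smul_smul, starRingEnd_apply]
  abel

lemma aux_im {v : A →L[ℂ] ℂ} (hv : ∀ x : A, 0 ≤ v (star x * x)) (y : A) :
    (v (star y * y)).im = 0 := by
  have := (Complex.le_def.mp (hv y)).2
  simpa using this.symm

lemma aux_key (v : A →L[ℂ] ℂ) (a b : A) (c : ℂ) : v (star (b + c • a) * (b + c • a))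
    = v (star b * b) + c * v (star b * a) + (starRingEnd ℂ c) * v (star a * b)
      + (c * starRingEnd ℂ c) * v (star a * a) := by
  rw [aux_expand]
  simp [smul_eq_mul]

lemma aux_herm {v : A →L[ℂ] ℂ} (hv : ∀ x : A, 0 ≤ v (star x * x)) (a b : A) :
    v (star b * a) = starRingEnd ℂ (v (star a * b)) := by
  have h1 : (v (star b * b) + 1 * v (star b * a) + (starRingEnd ℂ 1) * v (star a * b)
      + ((1 : ℂ) * starRingEnd ℂ 1) * v (star a * a)).im = 0 := by
    rw [← aux_key]; exact aux_im hv _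
  have h2 : (v (star b * b) + Complex.I * v (star b * a)
      + (starRingEnd ℂ Complex.I) * v (star a * b)
      + ((Complex.I : ℂ) * starRingEnd ℂ Complex.I) * v (star a * a)).im = 0 := by
    rw [← aux_key]; exact aux_im hv _
  simp only [map_one, one_mul, Complex.add_im, aux_im hv a, aux_im hv b, Complex.conj_I,
    mul_neg, Complex.I_mul_I, Complex.mul_im, Complex.I_re, Complex.I_im, Complex.neg_im,
    Complex.neg_re, Complex.one_re, Complex.one_im, neg_neg, neg_zero, zero_mul, mul_zero,
    one_mul, mul_one, add_zero, zero_add] at h1 h2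
  apply Complex.ext
  · simp only [Complex.conj_re]; linarith
  · simp only [Complex.conj_im]; linarith

lemma aux_cs {v : A →L[ℂ] ℂ} (hv : ∀ x : A, 0 ≤ v (star x * x)) (a b : A) :
    Complex.normSq (v (star a * b)) ≤ (v (star a * a)).re * (v (star b * b)).re := by
  set α := (v (star a * a)).re with hα'
  set β := (v (star b * b)).re with hβ'
  set s := v (star a * b) with hs'
  have hα : 0 ≤ α := by simpa using (Complex.le_def.mp (hv a)).1
  have hβ : 0 ≤ β := by simpa using (Complex.le_def.mp (hv b)).1
  have hvaa : v (star a * a) = (α : ℂ) := Complex.ext (by simp [hα']) (by simp [aux_im hv a])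
  have hba : v (star b * a) = starRingEnd ℂ s := aux_herm hv a b
  have key2 : ∀ r : ℝ, 0 ≤ β + 2 * r * Complex.normSq s + r ^ 2 * Complex.normSq s * α := by
    intro r
    have h := hv (b + ((r : ℂ) * s) • a)
    rw [aux_key] at h
    have hre := (Complex.le_def.mp h).1
    rw [hba, hvaa] at hre
    have e1 : (r : ℂ) * s * starRingEnd ℂ s = ((r * Complex.normSq s : ℝ) : ℂ) := by
      rw [mul_assoc, Complex.mul_conj, Complex.ofReal_mul]
    have e2 : starRingEnd ℂ ((r : ℂ) * s) * s = ((r * Complex.normSq s : ℝ) : ℂ) := by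
      rw [map_mul, Complex.conj_ofReal, mul_assoc,
        show starRingEnd ℂ s * s = ((Complex.normSq s : ℝ) : ℂ) from by
          rw [mul_comm, Complex.mul_conj],
        Complex.ofReal_mul]
    have e3 : (r : ℂ) * s * starRingEnd ℂ ((r : ℂ) * s) = ((r ^ 2 * Complex.normSq s : ℝ) : ℂ) := by
      rw [Complex.mul_conj, Complex.normSq_mul, Complex.normSq_ofReal]
      exact Complex.ofReal_inj.mpr (by ring)
    rw [e1, e2, e3] at hre
    simp only [Complex.zero_re, Complex.add_re, Complex.ofReal_re, ← Complex.ofReal_mul] at hre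
    linarith
  rcases eq_or_lt_of_le hα with h0 | hpos
  · have hs0 : Complex.normSq s = 0 := by
      by_contra hne
      have hp : 0 < Complex.normSq s := lt_of_le_of_ne (Complex.normSq_nonneg s) (Ne.symm hne)
      have := key2 (-(β + 1) / (2 * Complex.normSq s))
      rw [← h0] at this
      have harith : 2 * (-(β + 1) / (2 * Complex.normSq s)) * Complex.normSq s = -(β + 1) := by
        field_simp
      rw [harith] at this
      linarith
    rw [hs0]
    exact mul_nonneg hα hβ
  · have := key2 (-(1 / α))
    have e4 : 2 * (-(1 / α)) * Complex.normSq s + (-(1 / α)) ^ 2 * Complex.normSq s * α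
        = -(Complex.normSq s / α) := by field_simp; ring
    have h5 : Complex.normSq s / α ≤ β := by linarith [this, e4]
    calc Complex.normSq s = Complex.normSq s / α * α := by field_simp
      _ ≤ β * α := mul_le_mul_of_nonneg_right h5 hα
      _ = α * β := mul_comm _ _

end aux

lemma aux_nonneg' {A : Type*} [NormedRing A] [StarRing A] [CStarRing A] [NormedAlgebra ℂ A]
    [CompleteSpace A] [StarModule ℂ A] {v : A →L[ℂ] ℂ} (hv : ∀ x : A, 0 ≤ v (star x * x))
    [PartialOrder A] [StarOrderedRing A] {a : A} (ha : 0 ≤ a) : 0 ≤ v a := by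
  rw [StarOrderedRing.nonneg_iff] at ha
  induction ha using AddSubmonoid.closure_induction with
  | mem x hx => obtain ⟨s, rfl⟩ := hx; exact hv s
  | zero => simp
  | add x y _ _ hx hy => rw [map_add]; exact add_nonneg hx hy

lemma aux_mono_re {A : Type*} [NormedRing A] [StarRing A] [CStarRing A] [NormedAlgebra ℂ A]
    [CompleteSpace A] [StarModule ℂ A] {v : A →L[ℂ] ℂ} (hv : ∀ x : A, 0 ≤ v (star x * x))
    [PartialOrder A] [StarOrderedRing A] {a b : A} (hab : a ≤ b) : (v a).re ≤ (v b).re := by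
  have h := aux_nonneg' hv (sub_nonneg.mpr hab)
  rw [map_sub] at h
  have := (Complex.le_def.mp h).1
  simpa [Complex.sub_re] using this

/-- Let `ε` be a character on a unital C*-algebra `A` and let `e` be a nonzero central
projection with `exe = ε(x)e` for all `x`. Then for every state `u` on `A`, `u(e)` is a
real number in `[0,1]` and `‖u − ε‖ = 2(1 − u(e))`. -/
theorem norm_state_sub_character_eq
    {A : Type*} [NormedRing A] [StarRing A] [CStarRing A] [NormedAlgebra ℂ A]
    [CompleteSpace A] [StarModule ℂ A]
    (ε : A →L[ℂ] ℂ) (hε1 : ε 1 = 1) (hεm : ∀ x y : A, ε (x * y) = ε x * ε y)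
    (hεs : ∀ x : A, ε (star x) = starRingEnd ℂ (ε x))
    (e : A) (he0 : e ≠ 0) (hes : star e = e) (he2 : e * e = e)
    (hec : ∀ x : A, e * x = x * e) (heε : ∀ x : A, e * x * e = ε x • e)
    (u : A →L[ℂ] ℂ) (hupos : ∀ x : A, 0 ≤ u (star x * x)) (hu1 : u 1 = 1) :
    ∃ t : ℝ, u e = (t : ℂ) ∧ 0 ≤ t ∧ t ≤ 1 ∧ ‖u - ε‖ = 2 * (1 - t) := by
  letI : CStarAlgebra A := {}
  letI := CStarAlgebra.spectralOrder A
  haveI := CStarAlgebra.spectralOrderedRing A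
  haveI : Nontrivial A := nontrivial_of_ne e 0 he0
  set t : ℝ := (u e).re with ht
  have h0e : (0 : ℂ) ≤ u e := by have := hupos e; rwa [hes, he2] at this
  have ht0 : 0 ≤ t := by simpa using (Complex.le_def.mp h0e).1
  have hue : u e = (t : ℂ) := Complex.ext (by simp [ht]) (by simpa using (Complex.le_def.mp h0e).2.symm)
  set f : A := 1 - e with hf
  have hfs : star f = f := by simp [hf, star_sub, hes]
  have hf2 : f * f = f := by
    rw [hf, sub_mul, mul_sub, mul_sub, one_mul, one_mul, mul_one, he2]; abel
  have huf : u f = ((1 - t : ℝ) : ℂ) := by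
    rw [hf, map_sub, hu1, hue]; push_cast; ring
  have h0f : (0 : ℂ) ≤ u f := by have := hupos f; rwa [hfs, hf2] at this
  have ht1 : t ≤ 1 := by
    have := (Complex.le_def.mp h0f).1
    rw [huf] at this; simp at this; linarith
  -- ε e = 1
  have hεe : ε e = 1 := by
    have h := heε e
    rw [he2, he2] at h
    have h2 : (1 - ε e) • e = 0 := by rw [sub_smul, one_smul, ← h, sub_self]
    rcases smul_eq_zero.mp h2 with h3 | h3
    · exact (sub_eq_zero.mp h3).symm
    · exact absurd h3 he0
  have hεf : ε f = 0 := by rw [hf, map_sub, hε1, hεe, sub_self]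
  have hex : ∀ x : A, e * x = ε x • e := by
    intro x
    calc e * x = e * e * x := by rw [he2]
      _ = e * x * e := by rw [mul_assoc, hec (e * x)]
      _ = ε x • e := heε x
  have hxe : ∀ x : A, x * e = ε x • e := fun x => by rw [← hec x, hex x]
  have hfxf : ∀ x : A, f * x * f = x - ε x • e := by
    intro x
    have h1 : f * x * f = x - x * e - (e * x - e * x * e) := by rw [hf]; noncomm_ring
    rw [h1, heε x, hxe x, hex x]; abel
  have hsplit : ∀ x : A, u x - ε x = ε x * ((t : ℂ) - 1) + u (f * x * f) := by
    intro x
    have h1 : u (f * x * f) = u x - ε x * u e := by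
      rw [hfxf, map_sub, map_smul, smul_eq_mul]
    rw [h1, hue]; ring
  -- ε is positive, hence norm-bounded by 1
  have hεpos : ∀ x : A, 0 ≤ ε (star x * x) := by
    intro x
    rw [hεm, hεs, show starRingEnd ℂ (ε x) * ε x = ((Complex.normSq (ε x) : ℝ) : ℂ) from by
      rw [mul_comm, Complex.mul_conj]]
    exact Complex.zero_le_real.mpr (Complex.normSq_nonneg _)
  have hεalg : ∀ r : ℝ, ε (algebraMap ℝ A r) = (r : ℂ) := by
    intro r
    rw [Algebra.algebraMap_eq_smul_one, ← Complex.coe_smul, map_smul, hε1, smul_eq_mul, mul_one]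
  have hεb : ∀ x : A, ‖ε x‖ ≤ ‖x‖ := by
    intro x
    have h1 : (ε (star x * x)).re ≤ ‖x‖ ^ 2 := by
      have h2 := aux_mono_re hεpos (CStarAlgebra.star_mul_le_algebraMap_norm_sq (a := x))
      rwa [hεalg, Complex.ofReal_re] at h2
    have h3 : Complex.normSq (ε x) = (ε (star x * x)).re := by
      rw [hεm, hεs, show starRingEnd ℂ (ε x) * ε x = ((Complex.normSq (ε x) : ℝ) : ℂ) from by
        rw [mul_comm, Complex.mul_conj], Complex.ofReal_re]
    have h4 : ‖ε x‖ ^ 2 ≤ ‖x‖ ^ 2 := by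
      calc ‖ε x‖ ^ 2 = Complex.normSq (ε x) := by rw [Complex.sq_norm]
        _ = (ε (star x * x)).re := h3
        _ ≤ ‖x‖ ^ 2 := h1
    exact (pow_le_pow_iff_left₀ (norm_nonneg _) (norm_nonneg _) (by norm_num)).mp h4
  -- bound on u (f x f)
  have hufx : ∀ x : A, ‖u (f * x * f)‖ ≤ (1 - t) * ‖x‖ := by
    intro x
    have hcs := aux_cs hupos f (x * f)
    rw [hfs] at hcs
    have hr1 : f * (x * f) = f * x * f := by rw [mul_assoc]
    have hr2 : star (x * f) * (x * f) = f * (star x * x) * f := by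
      rw [star_mul, hfs]; noncomm_ring
    rw [hr1, hf2, hr2] at hcs
    have hord := star_left_conjugate_le_conjugate (CStarAlgebra.star_mul_le_algebraMap_norm_sq (a := x)) f
    rw [hfs] at hord
    have hrhs : f * algebraMap ℝ A (‖x‖ ^ 2) * f = (‖x‖ ^ 2) • f := by
      rw [Algebra.algebraMap_eq_smul_one, mul_smul_comm, mul_one, smul_mul_assoc, hf2]
    rw [hrhs] at hord
    have h5 : (u (f * (star x * x) * f)).re ≤ ‖x‖ ^ 2 * (1 - t) := by
      have h6 := aux_mono_re hupos hord
      have h7 : u ((‖x‖ ^ 2) • f) = ((‖x‖ ^ 2 * (1 - t) : ℝ) : ℂ) := by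
        rw [ContinuousLinearMap.map_smul_of_tower, huf]
        rw [Complex.real_smul]; push_cast; ring
      rw [h7, Complex.ofReal_re] at h6
      exact h6
    have h8 : Complex.normSq (u (f * x * f)) ≤ (1 - t) * (‖x‖ ^ 2 * (1 - t)) := by
      calc Complex.normSq (u (f * x * f)) ≤ (u f).re * (u (f * (star x * x) * f)).re := hcs
        _ ≤ (1 - t) * (‖x‖ ^ 2 * (1 - t)) := by
            rw [huf, Complex.ofReal_re]
            apply mul_le_mul_of_nonneg_left h5 (by linarith)
    have h9 : ‖u (f * x * f)‖ ^ 2 ≤ ((1 - t) * ‖x‖) ^ 2 := by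
      rw [Complex.sq_norm]
      calc Complex.normSq (u (f * x * f)) ≤ (1 - t) * (‖x‖ ^ 2 * (1 - t)) := h8
        _ = ((1 - t) * ‖x‖) ^ 2 := by ring
    exact (pow_le_pow_iff_left₀ (norm_nonneg _)
      (mul_nonneg (by linarith) (norm_nonneg _)) (by norm_num)).mp h9
  -- upper bound
  have hub : ‖u - ε‖ ≤ 2 * (1 - t) := by
    apply ContinuousLinearMap.opNorm_le_bound _ (by linarith)
    intro x
    rw [ContinuousLinearMap.sub_apply, hsplit x]
    have hnt : ‖((t : ℂ) - 1)‖ = 1 - t := by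
      rw [show ((t : ℂ) - 1) = (((t - 1 : ℝ)) : ℂ) from by push_cast; ring,
        Complex.norm_real, Real.norm_eq_abs, abs_of_nonpos (by linarith)]
      ring
    calc ‖ε x * ((t : ℂ) - 1) + u (f * x * f)‖
        ≤ ‖ε x * ((t : ℂ) - 1)‖ + ‖u (f * x * f)‖ := norm_add_le _ _
      _ = ‖ε x‖ * (1 - t) + ‖u (f * x * f)‖ := by rw [norm_mul, hnt]
      _ ≤ ‖x‖ * (1 - t) + (1 - t) * ‖x‖ := by
          have := hεb x; have := hufx x
          have h1t : (0:ℝ) ≤ 1 - t := by linarith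
          nlinarith [hεb x, hufx x]
      _ = 2 * (1 - t) * ‖x‖ := by ring
  -- lower bound
  set x₀ : A := e - f with hx₀
  have hef : e * f = 0 := by rw [hf, mul_sub, mul_one, he2, sub_self]
  have hfe : f * e = 0 := by rw [hf, sub_mul, one_mul, he2, sub_self]
  have hx₀s : star x₀ = x₀ := by rw [hx₀, star_sub, hes, hfs]
  have hx₀1 : x₀ * x₀ = 1 := by
    have h1 : x₀ * x₀ = e * e - e * f - (f * e - f * f) := by rw [hx₀]; noncomm_ring
    rw [h1, he2, hef, hfe, hf2, hf]; abel
  have hnx₀ : ‖x₀‖ = 1 := by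
    have h1 := CStarRing.norm_star_mul_self (x := x₀)
    rw [hx₀s, hx₀1, norm_one] at h1
    rcases mul_self_eq_one_iff.mp h1.symm with h2 | h2
    · exact h2
    · linarith [norm_nonneg x₀, h2]
  have happ : (u - ε) x₀ = ((2 * t - 2 : ℝ) : ℂ) := by
    have h1 : u x₀ = ((2 * t - 1 : ℝ) : ℂ) := by
      rw [hx₀, map_sub, hue, huf]; push_cast; ring
    have h2 : ε x₀ = 1 := by rw [hx₀, map_sub, hεe, hεf]; ring
    rw [ContinuousLinearMap.sub_apply, h1, h2]; push_cast; ring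
  have hlb : 2 * (1 - t) ≤ ‖u - ε‖ := by
    have h1 := (u - ε).unit_le_opNorm x₀ (le_of_eq hnx₀)
    rw [happ, Complex.norm_real, Real.norm_eq_abs, abs_of_nonpos (by linarith)] at h1
    linarith
  exact ⟨t, hue, ht0, ht1, le_antisymm hub hlb⟩
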